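/- Let α > 1/2 and let h be the Gamma(α,1) density h(u) = u^{α-1} e^{-u} / Γ(α). Then λ_h = 1/(2α−1); that is, the infimum of the set of λ ∈ [0,∞) for which there exists k ∈ ℝ with (∫_0^∞ u^{-1/2} e^{-su/2} h(u) du) / (∫_0^∞ u^{1/2} e^{-su/2} h(u) du) ≤ λ s + k for all s ≥ 0 equals 1/(2α−1). -/

import Mathlib

open MeasureTheory Set
open scoped ENNReal

/-- A mixing density: a Borel measurable function on `(0,∞)` (extended to all of `ℝ`),
nonnegative on `(0,∞)`, integrating to 1 over `(0,∞)`. -/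
def IsMixingDensity (h : ℝ → ℝ) : Prop :=
  Measurable h ∧ (∀ u ∈ Ioi (0:ℝ), 0 ≤ h u) ∧
    ∫⁻ u in Ioi (0:ℝ), ENNReal.ofReal (h u) = 1

/-- `∫_0^∞ u^{-1/2} e^{-su/2} h(u) du`, as an element of `[0,∞]`. -/
noncomputable def mixNum (h : ℝ → ℝ) (s : ℝ) : ℝ≥0∞ :=
  ∫⁻ u in Ioi (0:ℝ), ENNReal.ofReal (u ^ (-(1:ℝ) / 2) * Real.exp (-(s * u) / 2) * h u)

/-- `∫_0^∞ u^{1/2} e^{-su/2} h(u) du`, as an element of `[0,∞]`. -/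
noncomputable def mixDen (h : ℝ → ℝ) (s : ℝ) : ℝ≥0∞ :=
  ∫⁻ u in Ioi (0:ℝ), ENNReal.ofReal (u ^ ((1:ℝ) / 2) * Real.exp (-(s * u) / 2) * h u)

/-- `h ∈ A(λ)`: there is a constant `k` with
`(∫_0^∞ u^{-1/2} e^{-su/2} h du)/(∫_0^∞ u^{1/2} e^{-su/2} h du) ≤ λ s + k` for all `s ≥ 0`. -/
def MemA (h : ℝ → ℝ) (l : ℝ) : Prop :=
  0 ≤ l ∧ ∃ k : ℝ, ∀ s : ℝ, 0 ≤ s → mixNum h s / mixDen h s ≤ ENNReal.ofReal (l * s + k)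

/-- `λ_h ∈ [0,∞]`: the infimum of `{λ ∈ [0,∞) : h ∈ A(λ)}` (equal to `∞` if this set is empty). -/
noncomputable def lambdaH (h : ℝ → ℝ) : ℝ≥0∞ :=
  sInf (ENNReal.ofReal '' {l : ℝ | MemA h l})

lemma lint_gamma {a r : ℝ} (ha : 0 < a) (hr : 0 < r) :
    ∫⁻ x in Ioi (0:ℝ), ENNReal.ofReal (x ^ (a - 1) * Real.exp (-(r * x)))
      = ENNReal.ofReal (Real.Gamma a / r ^ a) := by
  have hΓ : 0 < Real.Gamma a := Real.Gamma_pos_of_pos ha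
  have hc : 0 < r ^ a / Real.Gamma a := by positivity
  have H := ProbabilityTheory.lintegral_gammaPDF_eq_one ha hr
  have hsplit : ∫⁻ x, ProbabilityTheory.gammaPDF a r x
      = (∫⁻ x in Iio (0:ℝ), ProbabilityTheory.gammaPDF a r x)
        + ∫⁻ x in Ici (0:ℝ), ProbabilityTheory.gammaPDF a r x := by
    rw [← lintegral_add_compl _ (measurableSet_Iio (a := (0:ℝ))), compl_Iio]
  have hleft : ∫⁻ x in Iio (0:ℝ), ProbabilityTheory.gammaPDF a r x = 0 := by
    rw [setLIntegral_congr_fun measurableSet_Iio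
      (fun x (hx : x < 0) ↦ ProbabilityTheory.gammaPDF_of_neg hx), lintegral_zero]
  have hIci : ∫⁻ x in Ici (0:ℝ), ProbabilityTheory.gammaPDF a r x
      = ∫⁻ x in Ioi (0:ℝ), ProbabilityTheory.gammaPDF a r x := by
    rw [restrict_Ioi_eq_restrict_Ici]
  have hcong : ∫⁻ x in Ioi (0:ℝ), ProbabilityTheory.gammaPDF a r x
      = ENNReal.ofReal (r ^ a / Real.Gamma a)
        * ∫⁻ x in Ioi (0:ℝ), ENNReal.ofReal (x ^ (a - 1) * Real.exp (-(r * x))) := by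
    rw [← lintegral_const_mul' _ _ ENNReal.ofReal_ne_top]
    refine setLIntegral_congr_fun measurableSet_Ioi (fun x hx ↦ ?_)
    rw [ProbabilityTheory.gammaPDF_of_nonneg (le_of_lt hx), ← ENNReal.ofReal_mul hc.le,
      mul_assoc]
  have key : ENNReal.ofReal (r ^ a / Real.Gamma a)
      * ∫⁻ x in Ioi (0:ℝ), ENNReal.ofReal (x ^ (a - 1) * Real.exp (-(r * x))) = 1 := by
    rw [← hcong, ← hIci]
    rw [hsplit, hleft, zero_add] at H
    exact H
  have := ENNReal.eq_inv_of_mul_eq_one_left (by rw [mul_comm] at key; exact key)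
  rw [this, ← ENNReal.ofReal_inv_of_pos hc]
  congr 1
  field_simp

lemma mix_integral {α : ℝ} (p : ℝ) (hα : 0 < α) (hp : 0 < α + p) {s : ℝ} (hs : 0 ≤ s) :
    ∫⁻ u in Ioi (0:ℝ), ENNReal.ofReal
        (u ^ p * Real.exp (-(s * u) / 2) * (u ^ (α - 1) * Real.exp (-u) / Real.Gamma α))
      = ENNReal.ofReal (Real.Gamma (α + p) / (Real.Gamma α * (1 + s / 2) ^ (α + p))) := by
  have hΓ : 0 < Real.Gamma α := Real.Gamma_pos_of_pos hα
  have hb : 0 < 1 + s / 2 := by linarith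
  have hcong : ∫⁻ u in Ioi (0:ℝ), ENNReal.ofReal
        (u ^ p * Real.exp (-(s * u) / 2) * (u ^ (α - 1) * Real.exp (-u) / Real.Gamma α))
      = ∫⁻ u in Ioi (0:ℝ), ENNReal.ofReal
        ((Real.Gamma α)⁻¹ * (u ^ (α + p - 1) * Real.exp (-((1 + s / 2) * u)))) := by
    refine setLIntegral_congr_fun measurableSet_Ioi (fun u hu ↦ ?_)
    congr 1
    have h1 : u ^ (α + p - 1) = u ^ (α - 1) * u ^ p := by
      rw [← Real.rpow_add hu]; ring_nf
    have h2 : Real.exp (-((1 + s / 2) * u)) = Real.exp (-u) * Real.exp (-(s * u) / 2) := by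
      rw [← Real.exp_add]; ring_nf
    rw [h1, h2]; field_simp
  rw [hcong]
  simp_rw [ENNReal.ofReal_mul (inv_nonneg.mpr hΓ.le)]
  rw [lintegral_const_mul' _ _ ENNReal.ofReal_ne_top, lint_gamma hp hb,
    ← ENNReal.ofReal_mul (inv_nonneg.mpr hΓ.le)]
  congr 1
  field_simp

lemma gamma_ratio_eq (α : ℝ) (hα : 1 / 2 < α) (h : ℝ → ℝ)
    (hdef : ∀ u : ℝ, 0 < u → h u = u ^ (α - 1) * Real.exp (-u) / Real.Gamma α)
    {s : ℝ} (hs : 0 ≤ s) :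
    mixNum h s / mixDen h s = ENNReal.ofReal ((s + 2) / (2 * α - 1)) := by
  have hα0 : 0 < α := by linarith
  have hΓ : 0 < Real.Gamma α := Real.Gamma_pos_of_pos hα0
  have hm : 0 < α - 1 / 2 := by linarith
  have hg : 0 < Real.Gamma (α - 1 / 2) := Real.Gamma_pos_of_pos hm
  have hb : 0 < 1 + s / 2 := by linarith
  have hnum : mixNum h s
      = ENNReal.ofReal (Real.Gamma (α + -(1) / 2)
          / (Real.Gamma α * (1 + s / 2) ^ (α + -(1) / 2))) := by
    rw [mixNum, ← mix_integral (-(1) / 2) hα0 (by linarith) hs]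
    refine setLIntegral_congr_fun measurableSet_Ioi (fun u hu ↦ ?_)
    rw [hdef u hu]
  have hden : mixDen h s
      = ENNReal.ofReal (Real.Gamma (α + 1 / 2)
          / (Real.Gamma α * (1 + s / 2) ^ (α + 1 / 2))) := by
    rw [mixDen, ← mix_integral (1 / 2) hα0 (by linarith) hs]
    refine setLIntegral_congr_fun measurableSet_Ioi (fun u hu ↦ ?_)
    rw [hdef u hu]
  have hΓ1 : Real.Gamma (α + 1 / 2) = (α - 1 / 2) * Real.Gamma (α - 1 / 2) := by
    have : α + 1 / 2 = (α - 1 / 2) + 1 := by ring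
    rw [this, Real.Gamma_add_one hm.ne']
  have hB : (0:ℝ) < (1 + s / 2) ^ (α - 1 / 2) := Real.rpow_pos_of_pos hb _
  have hb1 : (1 + s / 2) ^ (α + 1 / 2) = (1 + s / 2) ^ (α - 1 / 2) * (1 + s / 2) := by
    rw [← Real.rpow_add_one hb.ne']
    ring_nf
  have hdpos : 0 < Real.Gamma (α + 1 / 2) / (Real.Gamma α * (1 + s / 2) ^ (α + 1 / 2)) := by
    have : 0 < Real.Gamma (α + 1 / 2) := Real.Gamma_pos_of_pos (by linarith)
    positivity
  rw [hnum, hden, ← ENNReal.ofReal_div_of_pos hdpos]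
  congr 1
  have hneg : α + -(1) / 2 = α - 1 / 2 := by ring
  rw [hneg, hΓ1, hb1]
  rw [div_div_div_eq]
  rw [div_eq_div_iff (by positivity) (by nlinarith)]
  ring

/-- For the Gamma(α,1) mixing density with `α > 1/2`, `λ_h = 1/(2α-1)`. -/
theorem gamma_lambdaH (α : ℝ) (hα : 1 / 2 < α) (h : ℝ → ℝ)
    (hmix : IsMixingDensity h)
    (hdef : ∀ u : ℝ, 0 < u → h u = u ^ (α - 1) * Real.exp (-u) / Real.Gamma α) :
    lambdaH h = ENNReal.ofReal (1 / (2 * α - 1)) := by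
  have h2 : (0:ℝ) < 2 * α - 1 := by linarith
  set lam : ℝ := 1 / (2 * α - 1) with hlam
  have hlam0 : 0 < lam := by positivity
  set b : ℝ := 2 / (2 * α - 1) with hbdef
  have hb0 : 0 < b := by positivity
  have hlin : ∀ s : ℝ, (s + 2) / (2 * α - 1) = lam * s + b := by
    intro s; rw [hlam, hbdef]; field_simp
  have hset : {l : ℝ | MemA h l} = Ici lam := by
    ext l
    simp only [mem_setOf_eq, mem_Ici]
    constructor
    · rintro ⟨hl0, k, hk⟩
      by_contra hlt
      push_neg at hlt
      have hd : 0 < lam - l := by linarith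
      set s : ℝ := (max (k - b) 0 + 1) / (lam - l) with hsdef
      have hs0 : 0 ≤ s := by
        apply div_nonneg _ hd.le
        have := le_max_right (k - b) 0
        linarith
      have H := hk s hs0
      rw [gamma_ratio_eq α hα h hdef hs0, hlin s] at H
      have Hle : lam * s + b ≤ l * s + k ∨ lam * s + b ≤ 0 :=
        ENNReal.ofReal_le_ofReal_iff'.mp H
      have hpos : 0 < lam * s + b := by positivity
      have H1 : lam * s + b ≤ l * s + k := by
        rcases Hle with h1 | h1
        · exact h1
        · linarith
      have hms : (lam - l) * s = max (k - b) 0 + 1 := by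
        rw [hsdef, mul_div_cancel₀ _ hd.ne']
      have := le_max_left (k - b) 0
      nlinarith
    · intro hl
      refine ⟨le_trans hlam0.le hl, b, fun s hs ↦ ?_⟩
      rw [gamma_ratio_eq α hα h hdef hs, hlin s]
      apply ENNReal.ofReal_le_ofReal
      have : lam * s ≤ l * s := mul_le_mul_of_nonneg_right hl hs
      linarith
  rw [lambdaH, hset]
  apply le_antisymm
  · exact sInf_le ⟨lam, self_mem_Ici, rfl⟩
  · refine le_sInf ?_
    rintro x ⟨l, hl, rfl⟩
    exact ENNReal.ofReal_le_ofReal hl
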